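/- Upper-bound half of Lemma 1: for the (2^{nR1}, 2^{nR2}, n; p) random code ensemble used over the 2-DM-IC, for every n one has H(Y1^n | X1^n, C_n) ≤ n H(Y1 | X1, Q) and H(Y1^n | X1^n, C_n) ≤ n R2 + n H(Y1 | X1, X2, Q), where C_n denotes the random codebook (Q^n together with all codewords), X1^n = X1^n(M1) is the transmitted codeword of sender 1, and Y1^n is the channel output at receiver 1. -/

import Mathlib

open scoped BigOperators
open Filter

set_option synthInstance.maxSize 4000
set_option synthInstance.maxHeartbeats 1000000
set_option maxHeartbeats 1000000

noncomputable section

/-- Shannon entropy (base 2) of a finitely supported distribution `p`. -/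
def ent {α : Type*} [Fintype α] (p : α → ℝ) : ℝ := -∑ a, p a * Real.logb 2 (p a)

/-- The distribution (pushforward) of a random variable `f` on the finite
probability space `(Ω, p)`. -/
def distOf {Ω β : Type*} [Fintype Ω] [DecidableEq β] (p : Ω → ℝ) (f : Ω → β) : β → ℝ :=
  fun b => ∑ ω, if f ω = b then p ω else 0

/-- The entropy `H(f)` of a random variable `f` on the finite probability space `(Ω, p)`. -/
def entOf {Ω β : Type*} [Fintype Ω] [Fintype β] [DecidableEq β] (p : Ω → ℝ) (f : Ω → β) : ℝ :=
  ent (distOf p f)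

/-- The conditional entropy `H(f | g)`. -/
def condEnt {Ω β γ : Type*} [Fintype Ω] [Fintype β] [Fintype γ] [DecidableEq β] [DecidableEq γ]
    (p : Ω → ℝ) (f : Ω → β) (g : Ω → γ) : ℝ :=
  entOf p (fun ω => (f ω, g ω)) - entOf p g

/-- The mutual information `I(f; g)`. -/
def mutInfo {Ω β γ : Type*} [Fintype Ω] [Fintype β] [Fintype γ] [DecidableEq β] [DecidableEq γ]
    (p : Ω → ℝ) (f : Ω → β) (g : Ω → γ) : ℝ :=
  entOf p f + entOf p g - entOf p (fun ω => (f ω, g ω))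

/-- The conditional mutual information `I(f; g | h)`. -/
def condMutInfo {Ω β γ δ : Type*} [Fintype Ω] [Fintype β] [Fintype γ] [Fintype δ]
    [DecidableEq β] [DecidableEq γ] [DecidableEq δ]
    (p : Ω → ℝ) (f : Ω → β) (g : Ω → γ) (h : Ω → δ) : ℝ :=
  entOf p (fun ω => (f ω, h ω)) + entOf p (fun ω => (g ω, h ω)) -
    entOf p (fun ω => (f ω, g ω, h ω)) - entOf p h

/-- `p` is a probability mass function on the finite alphabet `α`. -/
def IsPMF {α : Type*} [Fintype α] (p : α → ℝ) : Prop := (∀ a, 0 ≤ p a) ∧ ∑ a, p a = 1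

/-- The number `2^{nR}` of messages at blocklength `n` and rate `R` (in bits). -/
def msgSize (n : ℕ) (R : ℝ) : ℕ := max 1 ⌊(2 : ℝ) ^ ((n : ℝ) * R)⌋₊

instance (n : ℕ) (R : ℝ) : NeZero (msgSize n R) :=
  ⟨by have h : 1 ≤ msgSize n R := le_max_left _ _; omega⟩

/-- The `ε`-typical set: `xs` is `ε`-typical for the pmf `p` if the empirical frequency of
every symbol `a` is within `ε · p a` of `p a`. -/
def Typical {α : Type*} [Fintype α] [DecidableEq α] (p : α → ℝ) (ε : ℝ) {n : ℕ}
    (xs : Fin n → α) : Prop :=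
  ∀ a, |((Finset.univ.filter fun i => xs i = a).card : ℝ) / (n : ℝ) - p a| ≤ ε * p a


section GeneralEntropyLemmas
set_option linter.unusedSectionVars false
variable {Ω β γ δ : Type*} [Fintype Ω] [Fintype β] [Fintype γ] [Fintype δ]
  [DecidableEq β] [DecidableEq γ] [DecidableEq δ]
variable {p : Ω → ℝ}

lemma distOf_nonneg (hp : ∀ ω, 0 ≤ p ω) (f : Ω → β) (b : β) : 0 ≤ distOf p f b :=
  Finset.sum_nonneg fun ω _ => by by_cases h : f ω = b <;> simp [h, hp ω]

lemma sum_distOf (f : Ω → β) : ∑ b, distOf p f b = ∑ ω, p ω := by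
  unfold distOf
  rw [Finset.sum_comm]
  exact Finset.sum_congr rfl fun ω _ => by simp

lemma distOf_comp' (f : Ω → β) (φ : β → γ) (c : γ) :
    distOf p (fun ω => φ (f ω)) c = ∑ b, if φ b = c then distOf p f b else 0 := by
  unfold distOf
  symm
  calc ∑ b, (if φ b = c then (∑ ω, if f ω = b then p ω else 0) else 0)
      = ∑ b, ∑ ω, (if f ω = b then (if φ b = c then p ω else 0) else 0) := by
        refine Finset.sum_congr rfl fun b _ => ?_
        split <;> rename_i h <;> simp [h]
    _ = ∑ ω, ∑ b, (if f ω = b then (if φ b = c then p ω else 0) else 0) := Finset.sum_comm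
    _ = ∑ ω, if φ (f ω) = c then p ω else 0 :=
        Finset.sum_congr rfl fun ω _ => by simp

lemma distOf_comp_congr {Ω' : Type*} [Fintype Ω'] {p' : Ω' → ℝ} {f : Ω → β} {f' : Ω' → β}
    (h : distOf p f = distOf p' f') (φ : β → γ) :
    distOf p (fun ω => φ (f ω)) = distOf p' (fun ω => φ (f' ω)) := by
  funext c
  rw [distOf_comp', distOf_comp', h]

lemma entOf_congr_dist {Ω' : Type*} [Fintype Ω'] {p' : Ω' → ℝ} {f : Ω → β} {f' : Ω' → β}
    (h : distOf p f = distOf p' f') : entOf p f = entOf p' f' := by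
  unfold entOf; rw [h]

lemma distOf_pair_snd (f : Ω → β) (g : Ω → γ) (c : γ) :
    distOf p g c = ∑ b, distOf p (fun ω => (f ω, g ω)) (b, c) := by
  unfold distOf
  symm
  calc ∑ b, ∑ ω, (if (f ω, g ω) = (b, c) then p ω else 0)
      = ∑ ω, ∑ b, (if (f ω, g ω) = (b, c) then p ω else 0) := Finset.sum_comm
    _ = ∑ ω, if g ω = c then p ω else 0 := by
        refine Finset.sum_congr rfl fun ω _ => ?_
        have : ∀ b, (if (f ω, g ω) = (b, c) then p ω else 0)
            = (if f ω = b then (if g ω = c then p ω else 0) else 0) := by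
          intro b; by_cases h1 : f ω = b <;> by_cases h2 : g ω = c <;>
            simp [h1, h2, Prod.ext_iff]
        rw [Finset.sum_congr rfl fun b _ => this b]
        simp

lemma condEnt_congr_dist {Ω' : Type*} [Fintype Ω'] {p' : Ω' → ℝ} {f : Ω → β} {f' : Ω' → β}
    {g : Ω → γ} {g' : Ω' → γ}
    (h : distOf p (fun ω => (f ω, g ω)) = distOf p' (fun ω => (f' ω, g' ω))) :
    condEnt p f g = condEnt p' f' g' := by
  unfold condEnt
  have h2 : distOf p g = distOf p' g' := distOf_comp_congr h Prod.snd
  rw [entOf_congr_dist h, entOf_congr_dist h2]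

lemma distOf_mid (f : Ω → β) (g : Ω → γ) (h : Ω → δ) (b : β) (d : δ) :
    distOf p (fun ω => (f ω, h ω)) (b, d)
      = ∑ c, distOf p (fun ω => (f ω, g ω, h ω)) (b, c, d) := by
  unfold distOf
  symm
  calc ∑ c, ∑ ω, (if (f ω, g ω, h ω) = (b, c, d) then p ω else 0)
      = ∑ ω, ∑ c, (if (f ω, g ω, h ω) = (b, c, d) then p ω else 0) := Finset.sum_comm
    _ = ∑ ω, if (f ω, h ω) = (b, d) then p ω else 0 := by
        refine Finset.sum_congr rfl fun ω _ => ?_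
        have : ∀ c, (if (f ω, g ω, h ω) = (b, c, d) then p ω else 0)
            = (if g ω = c then (if (f ω, h ω) = (b, d) then p ω else 0) else 0) := by
          intro c; by_cases h1 : g ω = c <;> by_cases h2 : (f ω, h ω) = (b, d) <;>
            simp_all [Prod.ext_iff]
        rw [Finset.sum_congr rfl fun c _ => this c]
        simp

lemma entOf_le_entOf_pair (hp : ∀ ω, 0 ≤ p ω) (f : Ω → β) (g : Ω → γ) :
    entOf p g ≤ entOf p (fun ω => (f ω, g ω)) := by
  unfold entOf ent
  rw [neg_le_neg_iff]
  set D : β × γ → ℝ := distOf p (fun ω => (f ω, g ω)) with hD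
  have hDnn : ∀ z, 0 ≤ D z := fun z => distOf_nonneg hp _ z
  have hM : ∀ c, distOf p g c = ∑ b, D (b, c) := fun c => distOf_pair_snd f g c
  calc ∑ z : β × γ, D z * Real.logb 2 (D z)
      = ∑ b, ∑ c, D (b, c) * Real.logb 2 (D (b, c)) := Fintype.sum_prod_type _
    _ = ∑ c, ∑ b, D (b, c) * Real.logb 2 (D (b, c)) := Finset.sum_comm
    _ ≤ ∑ c, ∑ b, D (b, c) * Real.logb 2 (∑ b', D (b', c)) := by
        refine Finset.sum_le_sum fun c _ => Finset.sum_le_sum fun b _ => ?_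
        rcases eq_or_lt_of_le (hDnn (b, c)) with h0 | hpos
        · rw [← h0]; simp
        · refine mul_le_mul_of_nonneg_left ?_ (hDnn _)
          exact Real.logb_le_logb_of_le one_lt_two hpos
            (Finset.single_le_sum (fun b' _ => hDnn (b', c)) (Finset.mem_univ b))
    _ = ∑ c, distOf p g c * Real.logb 2 (distOf p g c) := by
        refine Finset.sum_congr rfl fun c _ => ?_
        rw [hM c, Finset.sum_mul]
lemma condEnt_pair_le (hp : ∀ ω, 0 ≤ p ω) (f : Ω → β) (g : Ω → γ) (h : Ω → δ) :
    condEnt p f (fun ω => (g ω, h ω)) ≤ condEnt p f h := by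
  classical
  set P : β → γ → δ → ℝ := fun b c d => distOf p (fun ω => (f ω, g ω, h ω)) (b, c, d) with hP
  have hPnn : ∀ b c d, 0 ≤ P b c d := fun b c d => distOf_nonneg hp _ _
  set A : γ → δ → ℝ := fun c d => ∑ b, P b c d with hA
  set B : β → δ → ℝ := fun b d => ∑ c, P b c d with hB
  set C : δ → ℝ := fun d => ∑ c, A c d with hC
  have hAnn : ∀ c d, 0 ≤ A c d := fun c d => Finset.sum_nonneg fun b _ => hPnn b c d
  have hBnn : ∀ b d, 0 ≤ B b d := fun b d => Finset.sum_nonneg fun c _ => hPnn b c d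
  have hCnn : ∀ d, 0 ≤ C d := fun d => Finset.sum_nonneg fun c _ => hAnn c d
  set R : β → γ → δ → ℝ := fun b c d => A c d * B b d / C d with hR
  have hRnn : ∀ b c d, 0 ≤ R b c d := fun b c d =>
    div_nonneg (mul_nonneg (hAnn c d) (hBnn b d)) (hCnn d)
  have hCB : ∀ d, ∑ b, B b d = C d := by
    intro d; rw [hC]; simp only [hB, hA]; exact Finset.sum_comm
  -- the four distribution identities
  have hgh : ∀ c d, distOf p (fun ω => (g ω, h ω)) (c, d) = A c d := fun c d =>
    (distOf_pair_snd f (fun ω => (g ω, h ω)) (c, d)).symm ▸ rfl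
  have hfh : ∀ b d, distOf p (fun ω => (f ω, h ω)) (b, d) = B b d := fun b d =>
    distOf_mid f g h b d
  have hh : ∀ d, distOf p h d = C d := by
    intro d
    rw [distOf_pair_snd g h d]
    exact Finset.sum_congr rfl fun c _ => by
      rw [distOf_pair_snd f (fun ω => (g ω, h ω)) (c, d)]
  -- core pointwise inequality
  have hlog2 : (0:ℝ) < Real.log 2 := Real.log_pos one_lt_two
  have key : ∀ b c d, (P b c d - R b c d) / Real.log 2 ≤
      P b c d * Real.logb 2 (P b c d) - P b c d * Real.logb 2 (A c d)
        - P b c d * Real.logb 2 (B b d) + P b c d * Real.logb 2 (C d) := by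
    intro b c d
    rcases eq_or_lt_of_le (hPnn b c d) with h0 | hpos
    · rw [← h0]
      simp only [zero_mul, zero_sub, sub_zero, add_zero, zero_add]
      exact div_nonpos_of_nonpos_of_nonneg (by simpa using hRnn b c d) hlog2.le
    · have hAp : 0 < A c d :=
        lt_of_lt_of_le hpos (Finset.single_le_sum (fun b' _ => hPnn b' c d) (Finset.mem_univ b))
      have hBp : 0 < B b d :=
        lt_of_lt_of_le hpos (Finset.single_le_sum (fun c' _ => hPnn b c' d) (Finset.mem_univ c))
      have hCp : 0 < C d :=
        lt_of_lt_of_le hAp (Finset.single_le_sum (fun c' _ => hAnn c' d) (Finset.mem_univ c))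
      have hRp : 0 < R b c d := div_pos (mul_pos hAp hBp) hCp
      have hmain : P b c d * Real.log (R b c d / P b c d) ≤ R b c d - P b c d := by
        have := Real.log_le_sub_one_of_pos (div_pos hRp hpos)
        calc P b c d * Real.log (R b c d / P b c d)
            ≤ P b c d * (R b c d / P b c d - 1) := by
              exact mul_le_mul_of_nonneg_left this hpos.le
          _ = R b c d - P b c d := by field_simp
      have hlogR : Real.log (R b c d / P b c d)
          = Real.log (A c d) + Real.log (B b d) - Real.log (C d) - Real.log (P b c d) := by
        rw [Real.log_div hRp.ne' hpos.ne', hR]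
        rw [Real.log_div (mul_pos hAp hBp).ne' hCp.ne', Real.log_mul hAp.ne' hBp.ne']
      rw [hlogR] at hmain
      simp only [Real.logb, div_le_iff₀ hlog2]
      have expand : (P b c d * (Real.log (P b c d) / Real.log 2)
            - P b c d * (Real.log (A c d) / Real.log 2)
            - P b c d * (Real.log (B b d) / Real.log 2)
            + P b c d * (Real.log (C d) / Real.log 2)) * Real.log 2
          = P b c d * Real.log (P b c d) - P b c d * Real.log (A c d)
            - P b c d * Real.log (B b d) + P b c d * Real.log (C d) := by
        field_simp
      rw [expand]
      nlinarith [hmain]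
  -- reordering of triple sums
  have sum3_comm : ∀ F : β → γ → δ → ℝ,
      ∑ b, ∑ c, ∑ d, F b c d = ∑ d, ∑ c, ∑ b, F b c d := by
    intro F
    calc ∑ b, ∑ c, ∑ d, F b c d = ∑ b, ∑ d, ∑ c, F b c d :=
          Finset.sum_congr rfl fun b _ => Finset.sum_comm
      _ = ∑ d, ∑ b, ∑ c, F b c d := Finset.sum_comm
      _ = ∑ d, ∑ c, ∑ b, F b c d := Finset.sum_congr rfl fun d _ => Finset.sum_comm
  have hPsum : ∑ b, ∑ c, ∑ d, P b c d = ∑ d, C d := by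
    rw [sum3_comm]
  have hRsum : ∑ b, ∑ c, ∑ d, R b c d = ∑ d, C d := by
    rw [sum3_comm]
    refine Finset.sum_congr rfl fun d _ => ?_
    by_cases hc : C d = 0
    · have hA0 : ∀ c, A c d = 0 := fun c =>
        (Finset.sum_eq_zero_iff_of_nonneg (fun c' _ => hAnn c' d)).1 hc c (Finset.mem_univ c)
      simp [hR, hA0, hc]
    · have : ∀ c, ∑ b, R b c d = A c d := by
        intro c
        have : ∑ b, R b c d = A c d * (∑ b, B b d) / C d := by
          rw [hR]
          rw [← Finset.sum_div, ← Finset.mul_sum]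
        rw [this, hCB d, mul_div_assoc, div_self hc, mul_one]
      rw [Finset.sum_congr rfl fun c _ => this c]
  have hbig : 0 ≤ ∑ b, ∑ c, ∑ d,
      (P b c d * Real.logb 2 (P b c d) - P b c d * Real.logb 2 (A c d)
        - P b c d * Real.logb 2 (B b d) + P b c d * Real.logb 2 (C d)) := by
    have hle : ∑ b, ∑ c, ∑ d, (P b c d - R b c d) / Real.log 2 ≤ ∑ b, ∑ c, ∑ d,
        (P b c d * Real.logb 2 (P b c d) - P b c d * Real.logb 2 (A c d)
          - P b c d * Real.logb 2 (B b d) + P b c d * Real.logb 2 (C d)) :=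
      Finset.sum_le_sum fun b _ => Finset.sum_le_sum fun c _ =>
        Finset.sum_le_sum fun d _ => key b c d
    refine le_trans (le_of_eq ?_) hle
    simp only [← Finset.sum_div, Finset.sum_sub_distrib]
    rw [hPsum, hRsum]
    simp
  -- entropy expressions
  have e1 : entOf p (fun ω => (f ω, g ω, h ω))
      = -∑ b, ∑ c, ∑ d, P b c d * Real.logb 2 (P b c d) := by
    unfold entOf ent
    congr 1
    rw [Fintype.sum_prod_type]
    exact Finset.sum_congr rfl fun b _ => Fintype.sum_prod_type _
  have e2 : entOf p (fun ω => (g ω, h ω))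
      = -∑ c, ∑ d, A c d * Real.logb 2 (A c d) := by
    unfold entOf ent
    congr 1
    rw [Fintype.sum_prod_type]
    exact Finset.sum_congr rfl fun c _ => Finset.sum_congr rfl fun d _ => by rw [hgh c d]
  have e3 : entOf p (fun ω => (f ω, h ω))
      = -∑ b, ∑ d, B b d * Real.logb 2 (B b d) := by
    unfold entOf ent
    congr 1
    rw [Fintype.sum_prod_type]
    exact Finset.sum_congr rfl fun b _ => Finset.sum_congr rfl fun d _ => by rw [hfh b d]
  have e4 : entOf p h = -∑ d, C d * Real.logb 2 (C d) := by
    unfold entOf ent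
    congr 1
    exact Finset.sum_congr rfl fun d _ => by rw [hh d]
  have x2 : ∑ b, ∑ c, ∑ d, P b c d * Real.logb 2 (A c d)
      = ∑ c, ∑ d, A c d * Real.logb 2 (A c d) := by
    calc ∑ b, ∑ c, ∑ d, P b c d * Real.logb 2 (A c d)
        = ∑ c, ∑ b, ∑ d, P b c d * Real.logb 2 (A c d) := Finset.sum_comm
      _ = ∑ c, ∑ d, ∑ b, P b c d * Real.logb 2 (A c d) :=
          Finset.sum_congr rfl fun c _ => Finset.sum_comm
      _ = ∑ c, ∑ d, A c d * Real.logb 2 (A c d) := by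
          refine Finset.sum_congr rfl fun c _ => Finset.sum_congr rfl fun d _ => ?_
          rw [← Finset.sum_mul]
  have x3 : ∑ b, ∑ c, ∑ d, P b c d * Real.logb 2 (B b d)
      = ∑ b, ∑ d, B b d * Real.logb 2 (B b d) := by
    refine Finset.sum_congr rfl fun b _ => ?_
    calc ∑ c, ∑ d, P b c d * Real.logb 2 (B b d)
        = ∑ d, ∑ c, P b c d * Real.logb 2 (B b d) := Finset.sum_comm
      _ = ∑ d, B b d * Real.logb 2 (B b d) := by
          refine Finset.sum_congr rfl fun d _ => ?_
          rw [← Finset.sum_mul]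
  have x4 : ∑ b, ∑ c, ∑ d, P b c d * Real.logb 2 (C d)
      = ∑ d, C d * Real.logb 2 (C d) := by
    rw [sum3_comm]
    refine Finset.sum_congr rfl fun d _ => ?_
    calc ∑ c, ∑ b, P b c d * Real.logb 2 (C d)
        = ∑ c, A c d * Real.logb 2 (C d) := by
          refine Finset.sum_congr rfl fun c _ => ?_
          rw [← Finset.sum_mul]
      _ = C d * Real.logb 2 (C d) := by rw [← Finset.sum_mul]
  have hsplit : ∑ b, ∑ c, ∑ d,
      (P b c d * Real.logb 2 (P b c d) - P b c d * Real.logb 2 (A c d)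
        - P b c d * Real.logb 2 (B b d) + P b c d * Real.logb 2 (C d))
      = (∑ b, ∑ c, ∑ d, P b c d * Real.logb 2 (P b c d))
        - (∑ b, ∑ c, ∑ d, P b c d * Real.logb 2 (A c d))
        - (∑ b, ∑ c, ∑ d, P b c d * Real.logb 2 (B b d))
        + (∑ b, ∑ c, ∑ d, P b c d * Real.logb 2 (C d)) := by
    simp [Finset.sum_sub_distrib, Finset.sum_add_distrib]
  rw [hsplit, x2, x3, x4] at hbig
  unfold condEnt
  rw [e2, e3, e4]
  have e1' : entOf p (fun ω => (f ω, (g ω, h ω)))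
      = -∑ b, ∑ c, ∑ d, P b c d * Real.logb 2 (P b c d) := e1
  rw [e1']
  linarith



lemma entOf_comp_inj {e : β → γ} (he : Function.Injective e) (f : Ω → β) :
    entOf p (fun ω => e (f ω)) = entOf p f := by
  unfold entOf ent
  congr 1
  have hval : ∀ b, distOf p (fun ω => e (f ω)) (e b) = distOf p f b := by
    intro b
    rw [distOf_comp']
    have : ∀ b', (if e b' = e b then distOf p f b' else 0)
        = (if b' = b then distOf p f b' else 0) := by
      intro b'; by_cases h : b' = b <;> simp [h, he.eq_iff]
    rw [Finset.sum_congr rfl fun b' _ => this b']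
    simp
  have hzero : ∀ c, c ∉ Finset.univ.image e → distOf p (fun ω => e (f ω)) c = 0 := by
    intro c hc
    rw [distOf_comp']
    refine Finset.sum_eq_zero fun b _ => ?_
    have : e b ≠ c := fun h => hc (Finset.mem_image.2 ⟨b, Finset.mem_univ _, h⟩)
    simp [this]
  rw [← Finset.sum_subset (Finset.subset_univ (Finset.univ.image e))
    (fun c _ hc => by rw [hzero c hc]; simp)]
  rw [Finset.sum_image (fun b _ b' _ h => he h)]
  exact Finset.sum_congr rfl fun b _ => by rw [hval]

lemma condEnt_comp_le (hp : ∀ ω, 0 ≤ p ω) (F : Ω → β) (φ : β → γ) (g : Ω → δ) :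
    condEnt p (fun ω => φ (F ω)) g ≤ condEnt p F g := by
  unfold condEnt
  have h1 : entOf p (fun ω => (φ (F ω), g ω))
      ≤ entOf p (fun ω => (F ω, (φ (F ω), g ω))) :=
    entOf_le_entOf_pair hp F (fun ω => (φ (F ω), g ω))
  have h2 : entOf p (fun ω => (F ω, (φ (F ω), g ω))) = entOf p (fun ω => (F ω, g ω)) := by
    have he : Function.Injective (fun z : β × δ => (z.1, (φ z.1, z.2))) := by
      intro z z' h
      simpa [Prod.ext_iff] using ⟨(Prod.ext_iff.1 h).1, (Prod.ext_iff.1 (Prod.ext_iff.1 h).2).2⟩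
    exact entOf_comp_inj he (fun ω => (F ω, g ω))
  linarith

lemma condEnt_cond_comp_le (hp : ∀ ω, 0 ≤ p ω) (f : Ω → β) (g : Ω → γ) (ψ : γ → δ) :
    condEnt p f g ≤ condEnt p f (fun ω => ψ (g ω)) := by
  have h0 : condEnt p f (fun ω => (g ω, ψ (g ω))) ≤ condEnt p f (fun ω => ψ (g ω)) :=
    condEnt_pair_le hp f g (fun ω => ψ (g ω))
  have h1 : condEnt p f (fun ω => (g ω, ψ (g ω))) = condEnt p f g := by
    unfold condEnt
    have he1 : Function.Injective (fun z : β × γ => (z.1, (z.2, ψ z.2))) := by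
      intro z z' h; simp only [Prod.ext_iff] at h ⊢; exact ⟨h.1, h.2.1⟩
    have he2 : Function.Injective (fun c : γ => (c, ψ c)) := by
      intro c c' h; exact (Prod.ext_iff.1 h).1
    rw [entOf_comp_inj he1 (fun ω => (f ω, g ω)), entOf_comp_inj he2 g]
  linarith

lemma condEnt_chain (f : Ω → β) (m : Ω → γ) (g : Ω → δ) :
    condEnt p (fun ω => (f ω, m ω)) g
      = condEnt p m g + condEnt p f (fun ω => (m ω, g ω)) := by
  unfold condEnt
  have he : Function.Injective (fun z : β × γ × δ => ((z.1, z.2.1), z.2.2)) := by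
    intro z z' h; simp only [Prod.ext_iff] at h ⊢; exact ⟨h.1.1, h.1.2, h.2⟩
  have := entOf_comp_inj (p := p) he (fun ω => (f ω, m ω, g ω))
  simp only [] at this
  rw [← this]
  ring

lemma entOf_unit (hp1 : ∑ ω, p ω = 1) : entOf p (fun _ : Ω => ()) = 0 := by
  unfold entOf ent distOf
  simp [hp1]

lemma condEnt_le_entOf (hp : ∀ ω, 0 ≤ p ω) (hp1 : ∑ ω, p ω = 1) (f : Ω → β) (g : Ω → γ) :
    condEnt p f g ≤ entOf p f := by
  have h0 : condEnt p f g ≤ condEnt p f (fun _ => ()) :=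
    condEnt_cond_comp_le hp f g (fun _ => ())
  have h1 : condEnt p f (fun _ : Ω => ()) = entOf p f := by
    unfold condEnt
    rw [entOf_unit hp1]
    have he : Function.Injective (fun b : β => (b, ())) := fun b b' h => (Prod.ext_iff.1 h).1
    rw [entOf_comp_inj he f]
    ring
  linarith

lemma entOf_le_logb_card (hp : ∀ ω, 0 ≤ p ω) (hp1 : ∑ ω, p ω = 1) (f : Ω → β) :
    entOf p f ≤ Real.logb 2 (Fintype.card β) := by
  set D := distOf p f with hD
  have hDnn : ∀ b, 0 ≤ D b := fun b => distOf_nonneg hp f b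
  have hDsum : ∑ b, D b = 1 := by rw [hD, sum_distOf, hp1]
  have hK : 0 < (Fintype.card β : ℝ) := by
    have : Nonempty β := by
      by_contra h
      rw [not_nonempty_iff] at h
      have : ∑ b, D b = 0 := by simp
      rw [hDsum] at this; norm_num at this
    exact_mod_cast Fintype.card_pos
  have hlog2 : (0:ℝ) < Real.log 2 := Real.log_pos one_lt_two
  have key : ∀ b, (D b - 1/(Fintype.card β : ℝ))/Real.log 2
      ≤ D b * Real.logb 2 (D b) + D b * Real.logb 2 (Fintype.card β) := by
    intro b
    rcases eq_or_lt_of_le (hDnn b) with h0 | hpos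
    · rw [← h0]
      simp only [zero_mul, add_zero, zero_sub]
      refine div_nonpos_of_nonpos_of_nonneg ?_ hlog2.le
      simp [le_of_lt (by positivity : (0:ℝ) < 1/(Fintype.card β : ℝ))]
    · have hDK : 0 < D b * (Fintype.card β : ℝ) := mul_pos hpos hK
      have hlow : 1 - 1/(D b * (Fintype.card β : ℝ)) ≤ Real.log (D b * (Fintype.card β : ℝ)) := by
        have := Real.log_le_sub_one_of_pos (show (0:ℝ) < 1/(D b * (Fintype.card β:ℝ)) by positivity)
        rw [Real.log_div one_ne_zero hDK.ne'] at this
        simp only [Real.log_one] at this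
        linarith
      have hcomb : Real.logb 2 (D b) + Real.logb 2 (Fintype.card β)
          = Real.log (D b * (Fintype.card β : ℝ)) / Real.log 2 := by
        rw [Real.log_mul hpos.ne' hK.ne']
        simp [Real.logb]
        ring
      have : D b * Real.logb 2 (D b) + D b * Real.logb 2 (Fintype.card β)
          = D b * (Real.log (D b * (Fintype.card β : ℝ)) / Real.log 2) := by
        rw [← hcomb]; ring
      rw [this, div_le_iff₀ hlog2]
      have hcancel : D b * (Real.log (D b * (Fintype.card β : ℝ)) / Real.log 2) * Real.log 2
          = D b * Real.log (D b * (Fintype.card β : ℝ)) := by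
        field_simp
      rw [hcancel]
      have h2 : D b * (1 - 1/(D b * (Fintype.card β : ℝ)))
          ≤ D b * Real.log (D b * (Fintype.card β : ℝ)) :=
        mul_le_mul_of_nonneg_left hlow hpos.le
      have h3 : D b * (1 - 1/(D b * (Fintype.card β : ℝ))) = D b - 1/(Fintype.card β : ℝ) := by
        field_simp
      linarith

  have hsumkey : 0 ≤ ∑ b, (D b * Real.logb 2 (D b) + D b * Real.logb 2 (Fintype.card β)) := by
    have h1 : ∑ b, (D b - 1/(Fintype.card β : ℝ))/Real.log 2
        ≤ ∑ b, (D b * Real.logb 2 (D b) + D b * Real.logb 2 (Fintype.card β)) :=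
      Finset.sum_le_sum fun b _ => key b
    refine le_trans (le_of_eq ?_) h1
    rw [← Finset.sum_div, Finset.sum_sub_distrib, hDsum, Finset.sum_const, Finset.card_univ,
      nsmul_eq_mul, mul_one_div, div_self hK.ne']
    simp
  unfold entOf ent
  rw [← hD]
  have hsplit : ∑ b, (D b * Real.logb 2 (D b) + D b * Real.logb 2 (Fintype.card β))
      = (∑ b, D b * Real.logb 2 (D b)) + Real.logb 2 (Fintype.card β) := by
    rw [Finset.sum_add_distrib, ← Finset.sum_mul, hDsum, one_mul]
  rw [hsplit] at hsumkey
  linarith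


variable {Y : Type*} [Fintype Y] [DecidableEq Y]

lemma condEnt_pi_le (hp : ∀ ω, 0 ≤ p ω) :
    ∀ (n : ℕ) (F : Ω → (Fin n → Y)) (g : Ω → γ),
      condEnt p F g ≤ ∑ i, condEnt p (fun ω => F ω i) g := by
  intro n
  induction n with
  | zero =>
    intro F g
    have : condEnt p F g = 0 := by
      unfold condEnt
      have he : Function.Injective (fun c : γ => ((fun i : Fin 0 => (i.elim0 : Y)), c)) :=
        fun c c' h => (Prod.ext_iff.1 h).2
      have : (fun ω => (F ω, g ω))
          = fun ω => ((fun i : Fin 0 => (i.elim0 : Y)), g ω) := by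
        funext ω
        exact Prod.ext (funext fun i => i.elim0) rfl
      rw [this, entOf_comp_inj he g]
      ring
    rw [this]
    simp
  | succ n ih =>
    intro F g
    have hsnoc_inj : Function.Injective
        (fun z : ((Fin n → Y) × Y) × γ => ((Fin.snoc z.1.1 z.1.2 : Fin (n+1) → Y), z.2)) := by
      intro z z' h
      obtain ⟨h1, h2⟩ := Prod.ext_iff.1 h
      dsimp at h1 h2
      have hinit : z.1.1 = z'.1.1 := by
        have := congrArg Fin.init h1
        rwa [Fin.init_snoc, Fin.init_snoc] at this
      have hlast : z.1.2 = z'.1.2 := by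
        have := congrArg (fun u => u (Fin.last n)) h1
        simpa [Fin.snoc_last] using this
      exact Prod.ext (Prod.ext hinit hlast) h2
    have hsplit : condEnt p F g
        = condEnt p (fun ω => (Fin.init (F ω), F ω (Fin.last n))) g := by
      unfold condEnt
      congr 1
      have : (fun ω => (F ω, g ω))
          = fun ω => ((fun z : ((Fin n → Y) × Y) × γ => ((Fin.snoc z.1.1 z.1.2 : Fin (n+1) → Y), z.2))
              (((Fin.init (F ω), F ω (Fin.last n)), g ω))) := by
        funext ω
        simp [Fin.snoc_init_self]
      rw [this, entOf_comp_inj hsnoc_inj]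
    rw [hsplit, condEnt_chain]
    have h1 : condEnt p (fun ω => Fin.init (F ω)) (fun ω => (F ω (Fin.last n), g ω))
        ≤ condEnt p (fun ω => Fin.init (F ω)) g :=
      condEnt_pair_le hp _ _ _
    have h2 : condEnt p (fun ω => Fin.init (F ω)) g
        ≤ ∑ i : Fin n, condEnt p (fun ω => Fin.init (F ω) i) g := ih _ g
    have h3 : ∀ i : Fin n, condEnt p (fun ω => Fin.init (F ω) i) g
        = condEnt p (fun ω => F ω i.castSucc) g := by
      intro i; rfl
    rw [Fin.sum_univ_castSucc]
    simp only [h3] at h2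
    linarith

end GeneralEntropyLemmas
section SumHelpers
variable {ι A : Type*} [Fintype ι] [DecidableEq ι] [Fintype A] [DecidableEq A]

lemma sum_fn_prod (g : ι → A → ℝ) :
    ∑ f : ι → A, ∏ i, g i (f i) = ∏ i, ∑ a, g i a :=
  (Fintype.prod_sum g).symm

lemma sum_fn_prod_ite (g : ι → A → ℝ) (i0 : ι) (pred : A → Prop) [DecidablePred pred]
    (hrow : ∀ i, i ≠ i0 → ∑ a, g i a = 1) :
    ∑ f : ι → A, (if pred (f i0) then ∏ i, g i (f i) else 0)
      = ∑ a, if pred a then g i0 a else 0 := by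
  set g' : ι → A → ℝ := fun i a => if i = i0 then (if pred a then g i a else 0) else g i a
    with hg'
  have hsummand : ∀ f : ι → A, (if pred (f i0) then ∏ i, g i (f i) else 0)
      = ∏ i, g' i (f i) := by
    intro f
    by_cases hp : pred (f i0)
    · rw [if_pos hp]
      refine Finset.prod_congr rfl fun i _ => ?_
      by_cases hi : i = i0
      · subst hi; simp [hg', hp]
      · simp [hg', hi]
    · rw [if_neg hp]
      symm
      apply Finset.prod_eq_zero (Finset.mem_univ i0)
      simp [hg', hp]
  rw [Finset.sum_congr rfl fun f _ => hsummand f, sum_fn_prod]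
  rw [Finset.prod_eq_single i0 (fun i _ hi => by
      rw [show ∑ a, g' i a = ∑ a, g i a from Finset.sum_congr rfl fun a _ => by simp [hg', hi]]
      exact hrow i hi)
    (fun h => absurd (Finset.mem_univ _) h)]
  exact Finset.sum_congr rfl fun a _ => by simp [hg']

lemma sum_fn_prod_eq (g : ι → A → ℝ) (i0 : ι) (a0 : A)
    (hrow : ∀ i, i ≠ i0 → ∑ a, g i a = 1) :
    ∑ f : ι → A, (if f i0 = a0 then ∏ i, g i (f i) else 0) = g i0 a0 := by
  rw [sum_fn_prod_ite g i0 (fun a => a = a0) hrow]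
  simp

end SumHelpers

lemma ite_sum_zero' {α : Type*} [Fintype α] {P : Prop} [Decidable P] (f : α → ℝ) :
    ∑ a, (if P then f a else 0) = if P then ∑ a, f a else 0 := by
  split <;> simp

lemma ite_mul_zero {P : Prop} [Decidable P] (K x : ℝ) :
    (if P then K * x else 0) = K * (if P then x else 0) := by
  split <;> simp


lemma msgSize_cast_le (n : ℕ) (R : ℝ) (hR : 0 ≤ R) :
    ((msgSize n R : ℕ) : ℝ) ≤ (2 : ℝ) ^ ((n : ℝ) * R) := by
  have hz1 : (1:ℝ) ≤ (2 : ℝ) ^ ((n : ℝ) * R) := by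
    rw [show (1:ℝ) = (2:ℝ) ^ (0:ℝ) from (Real.rpow_zero 2).symm]
    exact Real.rpow_le_rpow_of_exponent_le one_le_two (by positivity)
  unfold msgSize
  rw [Nat.cast_max]
  refine max_le (by exact_mod_cast hz1) (Nat.floor_le (by linarith))

lemma logb_msgSize_le (n : ℕ) (R : ℝ) (hR : 0 ≤ R) :
    Real.logb 2 ((msgSize n R : ℕ) : ℝ) ≤ (n : ℝ) * R := by
  have hpos : (0:ℝ) < ((msgSize n R : ℕ) : ℝ) := by
    have : 1 ≤ msgSize n R := le_max_left _ _
    exact_mod_cast Nat.lt_of_lt_of_le Nat.zero_lt_one this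
  rw [Real.logb_le_iff_le_rpow one_lt_two hpos]
  exact msgSize_cast_le n R hR

section TwoUser

variable {Q X1 X2 Y1 Y2 : Type*} [Fintype Q] [DecidableEq Q] [Fintype X1] [DecidableEq X1]
  [Fintype X2] [DecidableEq X2] [Fintype Y1] [DecidableEq Y1] [Fintype Y2] [DecidableEq Y2]

variable (pQ : Q → ℝ) (pX1 : Q → X1 → ℝ) (pX2 : Q → X2 → ℝ) (W : X1 → X2 → Y1 × Y2 → ℝ)

/-- The single-letter joint distribution of `(Q, X1, X2, Y1, Y2)` induced by the input pmf
`p(q) p(x1|q) p(x2|q)` and the channel `p(y1, y2 | x1, x2)`. -/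
def jointP : Q × X1 × X2 × Y1 × Y2 → ℝ := fun z =>
  pQ z.1 * pX1 z.1 z.2.1 * pX2 z.1 z.2.2.1 * W z.2.1 z.2.2.1 (z.2.2.2.1, z.2.2.2.2)

def vQ : Q × X1 × X2 × Y1 × Y2 → Q := fun z => z.1
def vX1 : Q × X1 × X2 × Y1 × Y2 → X1 := fun z => z.2.1
def vX2 : Q × X1 × X2 × Y1 × Y2 → X2 := fun z => z.2.2.1
def vY1 : Q × X1 × X2 × Y1 × Y2 → Y1 := fun z => z.2.2.2.1
def vY2 : Q × X1 × X2 × Y1 × Y2 → Y2 := fun z => z.2.2.2.2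

/-- The rate region `𝓡₁(p)` for receiver 1: either `R1 ≤ I(X1; Y1 | Q)`, or both
`R2 ≤ I(X2; Y1 | X1, Q)` and `R1 + R2 ≤ I(X1, X2; Y1 | Q)`. -/
def Region1 : Set (ℝ × ℝ) :=
  {r | 0 ≤ r.1 ∧ 0 ≤ r.2 ∧
    (r.1 ≤ condMutInfo (jointP pQ pX1 pX2 W) vX1 vY1 vQ ∨
      (r.2 ≤ condMutInfo (jointP pQ pX1 pX2 W) vX2 vY1 (fun z => (vX1 z, vQ z)) ∧
        r.1 + r.2 ≤ condMutInfo (jointP pQ pX1 pX2 W) (fun z => (vX1 z, vX2 z)) vY1 vQ))}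

/-- The rate region `𝓡₂(p)` for receiver 2, obtained from `𝓡₁(p)` by exchanging
the roles of the two users. -/
def Region2 : Set (ℝ × ℝ) :=
  {r | 0 ≤ r.1 ∧ 0 ≤ r.2 ∧
    (r.2 ≤ condMutInfo (jointP pQ pX1 pX2 W) vX2 vY2 vQ ∨
      (r.1 ≤ condMutInfo (jointP pQ pX1 pX2 W) vX1 vY2 (fun z => (vX2 z, vQ z)) ∧
        r.1 + r.2 ≤ condMutInfo (jointP pQ pX1 pX2 W) (fun z => (vX1 z, vX2 z)) vY2 vQ))}

/-- A codebook for the two-user interference channel: a time-sharing sequence together with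
a codeword for each message of each sender. -/
abbrev Codebook (Q X1 X2 : Type*) (n M1 M2 : ℕ) : Type _ :=
  (Fin n → Q) × (Fin M1 → Fin n → X1) × (Fin M2 → Fin n → X2)

/-- The probability of a codebook under the `p`-distributed random code ensemble. -/
def ensembleP {n M1 M2 : ℕ} (c : Codebook Q X1 X2 n M1 M2) : ℝ :=
  (∏ i, pQ (c.1 i)) * (∏ m1, ∏ i, pX1 (c.1 i) (c.2.1 m1 i)) *
    (∏ m2, ∏ i, pX2 (c.1 i) (c.2.2 m2 i))

/-- The average probability of error of the code given by codebook `c` and decoders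
`d1`, `d2` (messages are uniform, the channel is memoryless). -/
def PeCode {n M1 M2 : ℕ} (c : Codebook Q X1 X2 n M1 M2)
    (d1 : (Fin n → Y1) → Fin M1) (d2 : (Fin n → Y2) → Fin M2) : ℝ :=
  ((M1 : ℝ) * (M2 : ℝ))⁻¹ * ∑ m1, ∑ m2, ∑ y1 : Fin n → Y1, ∑ y2 : Fin n → Y2,
    (∏ i, W (c.2.1 m1 i) (c.2.2 m2 i) (y1 i, y2 i)) *
      (if d1 y1 = m1 ∧ d2 y2 = m2 then 0 else 1)

/-- The probability of error of the codebook `c` under optimal (maximum likelihood)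
decoding, i.e. the least error probability over all decoder pairs. -/
def PeOpt {n M1 M2 : ℕ} (c : Codebook Q X1 X2 n M1 M2) : ℝ :=
  ⨅ d : ((Fin n → Y1) → Fin M1) × ((Fin n → Y2) → Fin M2), PeCode W c d.1 d.2

/-- The probability of error under optimal decoding at blocklength `n` and rates `(R1, R2)`,
averaged over the random code ensemble. -/
def avgPeOpt (R1 R2 : ℝ) (n : ℕ) : ℝ :=
  ∑ c : Codebook Q X1 X2 n (msgSize n R1) (msgSize n R2),
    ensembleP pQ pX1 pX2 c * PeOpt W c

/-- The sample space of the full communication experiment: a random codebook, a uniform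
message pair, and the channel output sequences. -/
abbrev ExpSpace (Q X1 X2 Y1 Y2 : Type*) (n M1 M2 : ℕ) : Type _ :=
  Codebook Q X1 X2 n M1 M2 × Fin M1 × Fin M2 × (Fin n → Y1) × (Fin n → Y2)

/-- The joint distribution of the communication experiment: the codebook is drawn from the
random code ensemble, the messages `(M1, M2)` are independent and uniform, and the output
sequences are produced by the memoryless channel from the transmitted codewords. -/
def expP {n M1 M2 : ℕ} : ExpSpace Q X1 X2 Y1 Y2 n M1 M2 → ℝ := fun ω =>
  ensembleP pQ pX1 pX2 ω.1 * ((M1 : ℝ) * (M2 : ℝ))⁻¹ *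
    ∏ i, W (ω.1.2.1 ω.2.1 i) (ω.1.2.2 ω.2.2.1 i) (ω.2.2.2.1 i, ω.2.2.2.2 i)


set_option linter.unusedSectionVars false

lemma step_c {n M : ℕ} {X : Type*} [Fintype X] [DecidableEq X] (pX : Q → X → ℝ)
    (hrow : ∀ q, ∑ x, pX q x = 1) (qn : Fin n → Q) (i0 : Fin n) (m0 : Fin M) (x0 : X) :
    ∑ c : Fin M → Fin n → X, (if c m0 i0 = x0 then ∏ m, ∏ i, pX (qn i) (c m i) else 0)
      = pX (qn i0) x0 := by
  have h1 := sum_fn_prod_ite (fun (m : Fin M) (b : Fin n → X) => ∏ i, pX (qn i) (b i)) m0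
    (fun b => b i0 = x0)
    (fun m _ => by
      rw [sum_fn_prod (fun (i : Fin n) (x : X) => pX (qn i) x)]
      exact Finset.prod_eq_one fun i _ => hrow (qn i))
  have h2 := sum_fn_prod_eq (fun (i : Fin n) (x : X) => pX (qn i) x) i0 x0
    (fun i _ => hrow (qn i))
  simpa using h1.trans (by simpa using h2)

lemma step_q {n : ℕ} (hrow : ∑ q, pQ q = 1) (i0 : Fin n) (q0 : Q) :
    ∑ qn : Fin n → Q, (if qn i0 = q0 then ∏ i, pQ (qn i) else 0) = pQ q0 := by
  have := sum_fn_prod_eq (fun (_ : Fin n) (q : Q) => pQ q) i0 q0 (fun i _ => hrow)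
  simpa using this

lemma step_y {n : ℕ} (hW : ∀ x1 x2, ∑ z : Y1 × Y2, W x1 x2 z = 1) (i0 : Fin n) (y0 : Y1)
    (a : Fin n → X1) (b : Fin n → X2) (K : ℝ) (P : Prop) [Decidable P] :
    ∑ y1v : Fin n → Y1, ∑ y2v : Fin n → Y2,
      (if y1v i0 = y0 ∧ P then K * ∏ i, W (a i) (b i) (y1v i, y2v i) else 0)
    = if P then K * (∑ y2, W (a i0) (b i0) (y0, y2)) else 0 := by
  by_cases hP : P
  case neg => simp [hP]
  simp only [hP, and_true, if_true]
  have hw1row : ∀ x1 x2, ∑ yy : Y1, ∑ y2, W x1 x2 (yy, y2) = 1 := fun x1 x2 => by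
    rw [← Fintype.sum_prod_type]; exact hW _ _
  calc ∑ y1v : Fin n → Y1, ∑ y2v : Fin n → Y2,
        (if y1v i0 = y0 then K * ∏ i, W (a i) (b i) (y1v i, y2v i) else 0)
      = ∑ y1v : Fin n → Y1,
          (if y1v i0 = y0 then K * ∏ i, (∑ y2, W (a i) (b i) (y1v i, y2)) else 0) := by
        refine Finset.sum_congr rfl fun y1v _ => ?_
        by_cases hy : y1v i0 = y0
        · simp only [hy, if_true, ← Finset.mul_sum]
          congr 1
          exact sum_fn_prod (fun (i : Fin n) (yy : Y2) => W (a i) (b i) (y1v i, yy))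
        · simp [hy]
    _ = K * ∑ y1v : Fin n → Y1,
          (if y1v i0 = y0 then ∏ i, (∑ y2, W (a i) (b i) (y1v i, y2)) else 0) := by
        rw [Finset.mul_sum]
        exact Finset.sum_congr rfl fun y1v _ => ite_mul_zero _ _
    _ = K * (∑ y2, W (a i0) (b i0) (y0, y2)) := by
        congr 1
        exact sum_fn_prod_eq (fun (i : Fin n) (yy : Y1) => ∑ y2, W (a i) (b i) (yy, y2)) i0 y0
          (fun i _ => hw1row (a i) (b i))

lemma inner5 {n M1 M2 : ℕ}
    (hpQr : ∑ q, pQ q = 1) (hpX1r : ∀ q, ∑ x, pX1 q x = 1) (hpX2r : ∀ q, ∑ x, pX2 q x = 1)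
    (hWr : ∀ x1 x2, ∑ z : Y1 × Y2, W x1 x2 z = 1)
    (i0 : Fin n) (y0 : Y1) (x10 : X1) (x20 : X2) (q0 : Q) (m1 : Fin M1) (m2 : Fin M2) (K : ℝ) :
    ∑ qn : Fin n → Q, ∑ c1 : Fin M1 → Fin n → X1, ∑ c2 : Fin M2 → Fin n → X2,
      ∑ y1v : Fin n → Y1, ∑ y2v : Fin n → Y2,
      (if y1v i0 = y0 ∧ c1 m1 i0 = x10 ∧ c2 m2 i0 = x20 ∧ qn i0 = q0
       then ((∏ i, pQ (qn i)) * (∏ m, ∏ i, pX1 (qn i) (c1 m i))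
          * (∏ m, ∏ i, pX2 (qn i) (c2 m i))) * K
          * ∏ i, W (c1 m1 i) (c2 m2 i) (y1v i, y2v i)
       else 0)
    = K * (pQ q0 * pX1 q0 x10 * pX2 q0 x20 * (∑ y2, W x10 x20 (y0, y2))) := by
  set W0 : ℝ := ∑ y2, W x10 x20 (y0, y2) with hW0
  calc ∑ qn : Fin n → Q, ∑ c1 : Fin M1 → Fin n → X1, ∑ c2 : Fin M2 → Fin n → X2,
      ∑ y1v : Fin n → Y1, ∑ y2v : Fin n → Y2,
      (if y1v i0 = y0 ∧ c1 m1 i0 = x10 ∧ c2 m2 i0 = x20 ∧ qn i0 = q0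
       then ((∏ i, pQ (qn i)) * (∏ m, ∏ i, pX1 (qn i) (c1 m i))
          * (∏ m, ∏ i, pX2 (qn i) (c2 m i))) * K
          * ∏ i, W (c1 m1 i) (c2 m2 i) (y1v i, y2v i)
       else 0)
      = ∑ qn : Fin n → Q, ∑ c1 : Fin M1 → Fin n → X1, ∑ c2 : Fin M2 → Fin n → X2,
          (if c1 m1 i0 = x10 ∧ c2 m2 i0 = x20 ∧ qn i0 = q0
           then ((K * W0 * ∏ i, pQ (qn i)) * (∏ m, ∏ i, pX1 (qn i) (c1 m i)))
                * (∏ m, ∏ i, pX2 (qn i) (c2 m i))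
           else 0) := by
        refine Finset.sum_congr rfl fun qn _ => Finset.sum_congr rfl fun c1 _ =>
          Finset.sum_congr rfl fun c2 _ => ?_
        rw [step_y W hWr i0 y0 (c1 m1) (c2 m2)
          (((∏ i, pQ (qn i)) * (∏ m, ∏ i, pX1 (qn i) (c1 m i))
            * (∏ m, ∏ i, pX2 (qn i) (c2 m i))) * K)
          (c1 m1 i0 = x10 ∧ c2 m2 i0 = x20 ∧ qn i0 = q0)]
        by_cases h : c1 m1 i0 = x10 ∧ c2 m2 i0 = x20 ∧ qn i0 = q0
        · rw [if_pos h, if_pos h, h.1, h.2.1, ← hW0]; ring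
        · rw [if_neg h, if_neg h]
    _ = ∑ qn : Fin n → Q, ∑ c1 : Fin M1 → Fin n → X1,
          (if c1 m1 i0 = x10 ∧ qn i0 = q0
           then ((K * W0 * ∏ i, pQ (qn i)) * pX2 (qn i0) x20)
                * (∏ m, ∏ i, pX1 (qn i) (c1 m i))
           else 0) := by
        refine Finset.sum_congr rfl fun qn _ => Finset.sum_congr rfl fun c1 _ => ?_
        by_cases h : c1 m1 i0 = x10 ∧ qn i0 = q0
        · rw [if_pos h]
          have hpt : ∀ c2 : Fin M2 → Fin n → X2,
              (if c1 m1 i0 = x10 ∧ c2 m2 i0 = x20 ∧ qn i0 = q0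
               then ((K * W0 * ∏ i, pQ (qn i)) * (∏ m, ∏ i, pX1 (qn i) (c1 m i)))
                    * (∏ m, ∏ i, pX2 (qn i) (c2 m i))
               else 0)
              = ((K * W0 * ∏ i, pQ (qn i)) * (∏ m, ∏ i, pX1 (qn i) (c1 m i)))
                * (if c2 m2 i0 = x20 then (∏ m, ∏ i, pX2 (qn i) (c2 m i)) else 0) := by
            intro c2
            by_cases hb : c2 m2 i0 = x20
            · rw [if_pos ⟨h.1, hb, h.2⟩, if_pos hb]
            · rw [if_neg (fun hc => hb hc.2.1), if_neg hb, mul_zero]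
          rw [Finset.sum_congr rfl fun c2 _ => hpt c2, ← Finset.mul_sum,
            step_c pX2 hpX2r qn i0 m2 x20]
          ring
        · rw [if_neg h]
          refine Finset.sum_eq_zero fun c2 _ => ?_
          rw [if_neg (fun hc => h ⟨hc.1, hc.2.2⟩)]
    _ = ∑ qn : Fin n → Q,
          (if qn i0 = q0
           then ((K * W0 * ∏ i, pQ (qn i)) * pX2 (qn i0) x20) * pX1 (qn i0) x10
           else 0) := by
        refine Finset.sum_congr rfl fun qn _ => ?_
        by_cases h : qn i0 = q0
        · rw [if_pos h]
          have hpt : ∀ c1 : Fin M1 → Fin n → X1,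
              (if c1 m1 i0 = x10 ∧ qn i0 = q0
               then ((K * W0 * ∏ i, pQ (qn i)) * pX2 (qn i0) x20)
                    * (∏ m, ∏ i, pX1 (qn i) (c1 m i))
               else 0)
              = ((K * W0 * ∏ i, pQ (qn i)) * pX2 (qn i0) x20)
                * (if c1 m1 i0 = x10 then (∏ m, ∏ i, pX1 (qn i) (c1 m i)) else 0) := by
            intro c1
            by_cases hb : c1 m1 i0 = x10
            · rw [if_pos ⟨hb, h⟩, if_pos hb]
            · rw [if_neg (fun hc => hb hc.1), if_neg hb, mul_zero]
          rw [Finset.sum_congr rfl fun c1 _ => hpt c1, ← Finset.mul_sum,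
            step_c pX1 hpX1r qn i0 m1 x10]
        · rw [if_neg h]
          refine Finset.sum_eq_zero fun c1 _ => ?_
          rw [if_neg (fun hc => h hc.2)]
    _ = (K * W0 * pX2 q0 x20 * pX1 q0 x10) *
          ∑ qn : Fin n → Q, (if qn i0 = q0 then ∏ i, pQ (qn i) else 0) := by
        conv_rhs => rw [Finset.mul_sum]
        refine Finset.sum_congr rfl fun qn _ => ?_
        by_cases h : qn i0 = q0
        · rw [if_pos h, if_pos h, h]; ring
        · rw [if_neg h, if_neg h, mul_zero]
    _ = K * (pQ q0 * pX1 q0 x10 * pX2 q0 x20 * W0) := by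
        rw [step_q pQ hpQr i0 q0]; ring


def reidx (Q X1 X2 Y1 Y2 : Type*) (n M1 M2 : ℕ) :
    (Fin M1 × Fin M2 × (Fin n → Q) × (Fin M1 → Fin n → X1) × (Fin M2 → Fin n → X2)
      × (Fin n → Y1) × (Fin n → Y2)) ≃ ExpSpace Q X1 X2 Y1 Y2 n M1 M2 where
  toFun t := ((t.2.2.1, t.2.2.2.1, t.2.2.2.2.1), t.1, t.2.1, t.2.2.2.2.2.1, t.2.2.2.2.2.2)
  invFun ω := (ω.2.1, ω.2.2.1, ω.1.1, ω.1.2.1, ω.1.2.2, ω.2.2.2.1, ω.2.2.2.2)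
  left_inv := fun _ => rfl
  right_inv := fun _ => rfl

lemma jointP_marginal (y0 : Y1) (x10 : X1) (x20 : X2) (q0 : Q) :
    distOf (jointP pQ pX1 pX2 W) (fun z => (vY1 z, (vX1 z, vX2 z, vQ z))) (y0, (x10, x20, q0))
      = pQ q0 * pX1 q0 x10 * pX2 q0 x20 * (∑ y2, W x10 x20 (y0, y2)) := by
  unfold distOf jointP vY1 vX1 vX2 vQ
  simp only [Fintype.sum_prod_type, Prod.mk.injEq]
  rw [Finset.sum_eq_single q0 ?_ ?_]
  rotate_left
  · intro q _ hq
    refine Finset.sum_eq_zero fun x1 _ => Finset.sum_eq_zero fun x2 _ =>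
      Finset.sum_eq_zero fun y1 _ => Finset.sum_eq_zero fun y2 _ => ?_
    simp [hq]
  · intro h; exact absurd (Finset.mem_univ _) h
  rw [Finset.sum_eq_single x10 ?_ ?_]
  rotate_left
  · intro x1 _ hx
    refine Finset.sum_eq_zero fun x2 _ =>
      Finset.sum_eq_zero fun y1 _ => Finset.sum_eq_zero fun y2 _ => ?_
    simp [hx]
  · intro h; exact absurd (Finset.mem_univ _) h
  rw [Finset.sum_eq_single x20 ?_ ?_]
  rotate_left
  · intro x2 _ hx
    refine Finset.sum_eq_zero fun y1 _ => Finset.sum_eq_zero fun y2 _ => ?_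
    simp [hx]
  · intro h; exact absurd (Finset.mem_univ _) h
  rw [Finset.sum_eq_single y0 ?_ ?_]
  rotate_left
  · intro y1 _ hy
    refine Finset.sum_eq_zero fun y2 _ => ?_
    simp [hy]
  · intro h; exact absurd (Finset.mem_univ _) h
  rw [Finset.mul_sum]
  refine Finset.sum_congr rfl fun y2 _ => ?_
  simp


lemma sum_table {n M : ℕ} {X : Type*} [Fintype X] [DecidableEq X] (pX : Q → X → ℝ)
    (hrow : ∀ q, ∑ x, pX q x = 1) (qn : Fin n → Q) :
    ∑ c : Fin M → Fin n → X, ∏ m, ∏ i, pX (qn i) (c m i) = 1 := by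
  rw [sum_fn_prod (fun (m : Fin M) (b : Fin n → X) => ∏ i, pX (qn i) (b i))]
  refine Finset.prod_eq_one fun m _ => ?_
  rw [sum_fn_prod (fun (i : Fin n) (x : X) => pX (qn i) x)]
  exact Finset.prod_eq_one fun i _ => hrow (qn i)

lemma inner5_total {n M1 M2 : ℕ}
    (hpQr : ∑ q, pQ q = 1) (hpX1r : ∀ q, ∑ x, pX1 q x = 1) (hpX2r : ∀ q, ∑ x, pX2 q x = 1)
    (hWr : ∀ x1 x2, ∑ z : Y1 × Y2, W x1 x2 z = 1)
    (m1 : Fin M1) (m2 : Fin M2) (K : ℝ) :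
    ∑ qn : Fin n → Q, ∑ c1 : Fin M1 → Fin n → X1, ∑ c2 : Fin M2 → Fin n → X2,
      ∑ y1v : Fin n → Y1, ∑ y2v : Fin n → Y2,
      (((∏ i, pQ (qn i)) * (∏ m, ∏ i, pX1 (qn i) (c1 m i))
          * (∏ m, ∏ i, pX2 (qn i) (c2 m i))) * K
          * ∏ i, W (c1 m1 i) (c2 m2 i) (y1v i, y2v i))
    = K := by
  have hw1row : ∀ x1 x2, ∑ yy : Y1, ∑ y2, W x1 x2 (yy, y2) = 1 := fun x1 x2 => by
    rw [← Fintype.sum_prod_type]; exact hWr _ _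
  have hy : ∀ (a : Fin n → X1) (b : Fin n → X2) (K' : ℝ),
      ∑ y1v : Fin n → Y1, ∑ y2v : Fin n → Y2,
        (K' * ∏ i, W (a i) (b i) (y1v i, y2v i)) = K' := by
    intro a b K'
    calc ∑ y1v : Fin n → Y1, ∑ y2v : Fin n → Y2, (K' * ∏ i, W (a i) (b i) (y1v i, y2v i))
        = ∑ y1v : Fin n → Y1, K' * ∏ i, (∑ y2, W (a i) (b i) (y1v i, y2)) := by
          refine Finset.sum_congr rfl fun y1v _ => ?_
          rw [← Finset.mul_sum]
          congr 1
          exact sum_fn_prod (fun (i : Fin n) (yy : Y2) => W (a i) (b i) (y1v i, yy))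
      _ = K' * ∑ y1v : Fin n → Y1, ∏ i, (∑ y2, W (a i) (b i) (y1v i, y2)) := by
          rw [Finset.mul_sum]
      _ = K' := by
          rw [sum_fn_prod (fun (i : Fin n) (yy : Y1) => ∑ y2, W (a i) (b i) (yy, y2))]
          rw [Finset.prod_eq_one fun i _ => hw1row (a i) (b i), mul_one]
  calc ∑ qn : Fin n → Q, ∑ c1 : Fin M1 → Fin n → X1, ∑ c2 : Fin M2 → Fin n → X2,
      ∑ y1v : Fin n → Y1, ∑ y2v : Fin n → Y2,
      (((∏ i, pQ (qn i)) * (∏ m, ∏ i, pX1 (qn i) (c1 m i))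
          * (∏ m, ∏ i, pX2 (qn i) (c2 m i))) * K
          * ∏ i, W (c1 m1 i) (c2 m2 i) (y1v i, y2v i))
      = ∑ qn : Fin n → Q, ∑ c1 : Fin M1 → Fin n → X1, ∑ c2 : Fin M2 → Fin n → X2,
          (((∏ i, pQ (qn i)) * (∏ m, ∏ i, pX1 (qn i) (c1 m i))
            * (∏ m, ∏ i, pX2 (qn i) (c2 m i))) * K) := by
        refine Finset.sum_congr rfl fun qn _ => Finset.sum_congr rfl fun c1 _ =>
          Finset.sum_congr rfl fun c2 _ => hy (c1 m1) (c2 m2) _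
    _ = ∑ qn : Fin n → Q, ((∏ i, pQ (qn i)) * K) := by
        refine Finset.sum_congr rfl fun qn _ => ?_
        have hc2 : ∀ c1 : Fin M1 → Fin n → X1,
            ∑ c2 : Fin M2 → Fin n → X2,
              (((∏ i, pQ (qn i)) * (∏ m, ∏ i, pX1 (qn i) (c1 m i))
                * (∏ m, ∏ i, pX2 (qn i) (c2 m i))) * K)
            = ((∏ i, pQ (qn i)) * (∏ m, ∏ i, pX1 (qn i) (c1 m i))) * K := by
          intro c1
          calc ∑ c2 : Fin M2 → Fin n → X2,
              (((∏ i, pQ (qn i)) * (∏ m, ∏ i, pX1 (qn i) (c1 m i))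
                * (∏ m, ∏ i, pX2 (qn i) (c2 m i))) * K)
              = (((∏ i, pQ (qn i)) * (∏ m, ∏ i, pX1 (qn i) (c1 m i))) * K)
                  * ∑ c2 : Fin M2 → Fin n → X2, (∏ m, ∏ i, pX2 (qn i) (c2 m i)) := by
                rw [Finset.mul_sum]
                exact Finset.sum_congr rfl fun c2 _ => by ring
            _ = ((∏ i, pQ (qn i)) * (∏ m, ∏ i, pX1 (qn i) (c1 m i))) * K := by
                rw [sum_table pX2 hpX2r qn, mul_one]
        rw [Finset.sum_congr rfl fun c1 _ => hc2 c1]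
        calc ∑ c1 : Fin M1 → Fin n → X1,
            (((∏ i, pQ (qn i)) * (∏ m, ∏ i, pX1 (qn i) (c1 m i))) * K)
            = ((∏ i, pQ (qn i)) * K)
                * ∑ c1 : Fin M1 → Fin n → X1, (∏ m, ∏ i, pX1 (qn i) (c1 m i)) := by
              rw [Finset.mul_sum]
              exact Finset.sum_congr rfl fun c1 _ => by ring
          _ = (∏ i, pQ (qn i)) * K := by rw [sum_table pX1 hpX1r qn, mul_one]
    _ = K := by
        rw [← Finset.sum_mul]
        rw [show ∑ qn : Fin n → Q, ∏ i, pQ (qn i) = 1 from by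
          rw [sum_fn_prod (fun (_ : Fin n) (q : Q) => pQ q)]
          exact Finset.prod_eq_one fun i _ => hpQr, one_mul]


lemma marginal_master {n M1 M2 : ℕ} [NeZero M1] [NeZero M2]
    (hpQr : ∑ q, pQ q = 1) (hpX1r : ∀ q, ∑ x, pX1 q x = 1) (hpX2r : ∀ q, ∑ x, pX2 q x = 1)
    (hWr : ∀ x1 x2, ∑ z : Y1 × Y2, W x1 x2 z = 1) (i0 : Fin n) :
    distOf (expP pQ pX1 pX2 W (n := n) (M1 := M1) (M2 := M2))
        (fun ω => (ω.2.2.2.1 i0, (ω.1.2.1 ω.2.1 i0, ω.1.2.2 ω.2.2.1 i0, ω.1.1 i0)))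
      = distOf (jointP pQ pX1 pX2 W) (fun z => (vY1 z, (vX1 z, vX2 z, vQ z))) := by
  funext t
  obtain ⟨y0, x10, x20, q0⟩ := t
  rw [jointP_marginal]
  unfold distOf
  rw [← Equiv.sum_comp (reidx Q X1 X2 Y1 Y2 n M1 M2)
    (fun ω => if (ω.2.2.2.1 i0, (ω.1.2.1 ω.2.1 i0, ω.1.2.2 ω.2.2.1 i0, ω.1.1 i0))
        = (y0, (x10, x20, q0)) then expP pQ pX1 pX2 W ω else 0)]
  unfold reidx expP ensembleP
  simp only [Equiv.coe_fn_mk, Fintype.sum_prod_type, Prod.mk.injEq]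
  have inner : ∀ (m1 : Fin M1) (m2 : Fin M2),
      (∑ qn : Fin n → Q, ∑ c1 : Fin M1 → Fin n → X1, ∑ c2 : Fin M2 → Fin n → X2,
        ∑ y1v : Fin n → Y1, ∑ y2v : Fin n → Y2,
        (if y1v i0 = y0 ∧ c1 m1 i0 = x10 ∧ c2 m2 i0 = x20 ∧ qn i0 = q0
         then ((∏ i, pQ (qn i)) * (∏ m, ∏ i, pX1 (qn i) (c1 m i))
            * (∏ m, ∏ i, pX2 (qn i) (c2 m i))) * ((M1 : ℝ) * (M2 : ℝ))⁻¹
            * ∏ i, W (c1 m1 i) (c2 m2 i) (y1v i, y2v i)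
         else 0))
      = ((M1 : ℝ) * (M2 : ℝ))⁻¹
          * (pQ q0 * pX1 q0 x10 * pX2 q0 x20 * (∑ y2, W x10 x20 (y0, y2))) :=
    fun m1 m2 => inner5 pQ pX1 pX2 W hpQr hpX1r hpX2r hWr i0 y0 x10 x20 q0 m1 m2 _
  rw [Finset.sum_congr rfl fun m1 _ => Finset.sum_congr rfl fun m2 _ => inner m1 m2]
  rw [Finset.sum_const, Finset.sum_const, Finset.card_univ, Fintype.card_fin, smul_smul,
    nsmul_eq_mul]
  have hM1 : ((M1 : ℝ)) ≠ 0 := Nat.cast_ne_zero.2 (NeZero.ne M1)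
  have hM2 : ((M2 : ℝ)) ≠ 0 := Nat.cast_ne_zero.2 (NeZero.ne M2)
  rw [Nat.cast_mul]
  field_simp
  simp


lemma expP_sum_one {n M1 M2 : ℕ} [NeZero M1] [NeZero M2]
    (hpQr : ∑ q, pQ q = 1) (hpX1r : ∀ q, ∑ x, pX1 q x = 1) (hpX2r : ∀ q, ∑ x, pX2 q x = 1)
    (hWr : ∀ x1 x2, ∑ z : Y1 × Y2, W x1 x2 z = 1) :
    ∑ ω : ExpSpace Q X1 X2 Y1 Y2 n M1 M2, expP pQ pX1 pX2 W ω = 1 := by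
  rw [← Equiv.sum_comp (reidx Q X1 X2 Y1 Y2 n M1 M2) (expP pQ pX1 pX2 W)]
  unfold reidx expP ensembleP
  simp only [Equiv.coe_fn_mk, Fintype.sum_prod_type]
  have inner : ∀ (m1 : Fin M1) (m2 : Fin M2),
      (∑ qn : Fin n → Q, ∑ c1 : Fin M1 → Fin n → X1, ∑ c2 : Fin M2 → Fin n → X2,
        ∑ y1v : Fin n → Y1, ∑ y2v : Fin n → Y2,
        (((∏ i, pQ (qn i)) * (∏ m, ∏ i, pX1 (qn i) (c1 m i))
            * (∏ m, ∏ i, pX2 (qn i) (c2 m i))) * ((M1 : ℝ) * (M2 : ℝ))⁻¹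
            * ∏ i, W (c1 m1 i) (c2 m2 i) (y1v i, y2v i)))
      = ((M1 : ℝ) * (M2 : ℝ))⁻¹ :=
    fun m1 m2 => inner5_total pQ pX1 pX2 W hpQr hpX1r hpX2r hWr m1 m2 _
  rw [Finset.sum_congr rfl fun m1 _ => Finset.sum_congr rfl fun m2 _ => inner m1 m2]
  rw [Finset.sum_const, Finset.sum_const, Finset.card_univ, Fintype.card_fin, smul_smul,
    nsmul_eq_mul]
  have hM1 : ((M1 : ℝ)) ≠ 0 := Nat.cast_ne_zero.2 (NeZero.ne M1)
  have hM2 : ((M2 : ℝ)) ≠ 0 := Nat.cast_ne_zero.2 (NeZero.ne M2)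
  rw [Nat.cast_mul]
  field_simp
  simp

lemma expP_nonneg {n M1 M2 : ℕ}
    (hpQ0 : ∀ q, 0 ≤ pQ q) (hpX10 : ∀ q x, 0 ≤ pX1 q x) (hpX20 : ∀ q x, 0 ≤ pX2 q x)
    (hW0 : ∀ x1 x2 z, 0 ≤ W x1 x2 z) (ω : ExpSpace Q X1 X2 Y1 Y2 n M1 M2) :
    0 ≤ expP pQ pX1 pX2 W ω := by
  unfold expP ensembleP
  refine mul_nonneg (mul_nonneg (mul_nonneg (mul_nonneg ?_ ?_) ?_) ?_) ?_
  · exact Finset.prod_nonneg fun i _ => hpQ0 _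
  · exact Finset.prod_nonneg fun m _ => Finset.prod_nonneg fun i _ => hpX10 _ _
  · exact Finset.prod_nonneg fun m _ => Finset.prod_nonneg fun i _ => hpX20 _ _
  · positivity
  · exact Finset.prod_nonneg fun i _ => hW0 _ _ _


/-- **Upper-bound half of Lemma 1.** For every `n`,
`H(Y1^n | X1^n, C_n) ≤ n H(Y1 | X1, Q)` and
`H(Y1^n | X1^n, C_n) ≤ n R2 + n H(Y1 | X1, X2, Q)`. -/
theorem conditional_output_entropy_upper_bounds
    (hpQ : IsPMF pQ) (hpX1 : ∀ q, IsPMF (pX1 q)) (hpX2 : ∀ q, IsPMF (pX2 q))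
    (hW : ∀ x1 x2, IsPMF (W x1 x2)) (R1 R2 : ℝ) (hR1 : 0 ≤ R1) (hR2 : 0 ≤ R2) (n : ℕ) :
    condEnt (expP pQ pX1 pX2 W (n := n) (M1 := msgSize n R1) (M2 := msgSize n R2))
        (fun ω => ω.2.2.2.1) (fun ω => (ω.1.2.1 ω.2.1, ω.1)) ≤
      (n : ℝ) * condEnt (jointP pQ pX1 pX2 W) vY1 (fun z => (vX1 z, vQ z)) ∧
    condEnt (expP pQ pX1 pX2 W (n := n) (M1 := msgSize n R1) (M2 := msgSize n R2))
        (fun ω => ω.2.2.2.1) (fun ω => (ω.1.2.1 ω.2.1, ω.1)) ≤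
      (n : ℝ) * R2 + (n : ℝ) * condEnt (jointP pQ pX1 pX2 W) vY1
        (fun z => (vX1 z, vX2 z, vQ z)) := by
  classical
  set PP := expP pQ pX1 pX2 W (n := n) (M1 := msgSize n R1) (M2 := msgSize n R2) with hPP
  have hp0 : ∀ ω : ExpSpace Q X1 X2 Y1 Y2 n (msgSize n R1) (msgSize n R2), 0 ≤ PP ω :=
    expP_nonneg pQ pX1 pX2 W hpQ.1 (fun q => (hpX1 q).1) (fun q => (hpX2 q).1)
      (fun x1 x2 => (hW x1 x2).1)
  have hp1 : ∑ ω : ExpSpace Q X1 X2 Y1 Y2 n (msgSize n R1) (msgSize n R2), PP ω = 1 :=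
    expP_sum_one pQ pX1 pX2 W hpQ.2 (fun q => (hpX1 q).2) (fun q => (hpX2 q).2)
      (fun x1 x2 => (hW x1 x2).2)
  have hmaster : ∀ i0 : Fin n,
      distOf PP (fun ω => (ω.2.2.2.1 i0, (ω.1.2.1 ω.2.1 i0, ω.1.2.2 ω.2.2.1 i0, ω.1.1 i0)))
        = distOf (jointP pQ pX1 pX2 W) (fun z => (vY1 z, (vX1 z, vX2 z, vQ z))) := fun i0 =>
    marginal_master pQ pX1 pX2 W (M1 := msgSize n R1) (M2 := msgSize n R2)
      hpQ.2 (fun q => (hpX1 q).2) (fun q => (hpX2 q).2) (fun x1 x2 => (hW x1 x2).2) i0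
  have key1 : ∀ i0 : Fin n,
      condEnt PP (fun ω => ω.2.2.2.1 i0) (fun ω => (ω.1.2.1 ω.2.1 i0, ω.1.1 i0))
      = condEnt (jointP pQ pX1 pX2 W) vY1 (fun z => (vX1 z, vQ z)) := fun i0 =>
    condEnt_congr_dist (distOf_comp_congr (hmaster i0)
      (fun z : Y1 × (X1 × X2 × Q) => (z.1, (z.2.1, z.2.2.2))))
  have key2 : ∀ i0 : Fin n,
      condEnt PP (fun ω => ω.2.2.2.1 i0)
        (fun ω => (ω.1.2.1 ω.2.1 i0, ω.1.2.2 ω.2.2.1 i0, ω.1.1 i0))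
      = condEnt (jointP pQ pX1 pX2 W) vY1 (fun z => (vX1 z, vX2 z, vQ z)) := fun i0 =>
    condEnt_congr_dist (hmaster i0)
  constructor
  · calc condEnt PP (fun ω => ω.2.2.2.1) (fun ω => (ω.1.2.1 ω.2.1, ω.1))
        ≤ condEnt PP (fun ω => ω.2.2.2.1) (fun ω => (ω.1.2.1 ω.2.1, ω.1.1)) :=
          condEnt_cond_comp_le hp0 _ (fun ω => (ω.1.2.1 ω.2.1, ω.1))
            (fun z => (z.1, z.2.1))
      _ ≤ ∑ i0 : Fin n,
            condEnt PP (fun ω => ω.2.2.2.1 i0) (fun ω => (ω.1.2.1 ω.2.1, ω.1.1)) :=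
          condEnt_pi_le hp0 n _ _
      _ ≤ ∑ i0 : Fin n,
            condEnt PP (fun ω => ω.2.2.2.1 i0) (fun ω => (ω.1.2.1 ω.2.1 i0, ω.1.1 i0)) :=
          Finset.sum_le_sum fun i0 _ =>
            condEnt_cond_comp_le hp0 _ (fun ω => (ω.1.2.1 ω.2.1, ω.1.1))
              (fun z => (z.1 i0, z.2 i0))
      _ = ∑ _i0 : Fin n, condEnt (jointP pQ pX1 pX2 W) vY1 (fun z => (vX1 z, vQ z)) :=
          Finset.sum_congr rfl fun i0 _ => key1 i0
      _ = (n : ℝ) * condEnt (jointP pQ pX1 pX2 W) vY1 (fun z => (vX1 z, vQ z)) := by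
          rw [Finset.sum_const, Finset.card_univ, Fintype.card_fin, nsmul_eq_mul]
  · have hM2 : condEnt PP (fun ω => ω.2.2.1) (fun ω => (ω.1.2.1 ω.2.1, ω.1))
        ≤ (n : ℝ) * R2 := by
      calc condEnt PP (fun ω => ω.2.2.1) (fun ω => (ω.1.2.1 ω.2.1, ω.1))
          ≤ entOf PP (fun ω => ω.2.2.1) := condEnt_le_entOf hp0 hp1 _ _
        _ ≤ Real.logb 2 (Fintype.card (Fin (msgSize n R2))) :=
            entOf_le_logb_card hp0 hp1 _
        _ ≤ (n : ℝ) * R2 := by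
            rw [Fintype.card_fin]
            exact logb_msgSize_le n R2 hR2
    have hchain : condEnt PP
        (fun ω => ((fun ω' => ω'.2.2.2.1) ω, (fun ω' => ω'.2.2.1) ω))
        (fun ω => (ω.1.2.1 ω.2.1, ω.1))
        = condEnt PP (fun ω => ω.2.2.1) (fun ω => (ω.1.2.1 ω.2.1, ω.1))
          + condEnt PP (fun ω => ω.2.2.2.1)
              (fun ω => (ω.2.2.1, (ω.1.2.1 ω.2.1, ω.1))) :=
      condEnt_chain _ _ _
    have hstep1 : condEnt PP (fun ω => ω.2.2.2.1) (fun ω => (ω.1.2.1 ω.2.1, ω.1))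
        ≤ condEnt PP
            (fun ω => ((fun ω' => ω'.2.2.2.1) ω, (fun ω' => ω'.2.2.1) ω))
            (fun ω => (ω.1.2.1 ω.2.1, ω.1)) :=
      condEnt_comp_le hp0 (fun ω => (ω.2.2.2.1, ω.2.2.1)) Prod.fst _
    have hstep3 : condEnt PP (fun ω => ω.2.2.2.1)
        (fun ω => (ω.2.2.1, (ω.1.2.1 ω.2.1, ω.1)))
        ≤ (n : ℝ) * condEnt (jointP pQ pX1 pX2 W) vY1
            (fun z => (vX1 z, vX2 z, vQ z)) := by
      have s1 : condEnt PP (fun ω => ω.2.2.2.1)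
          (fun ω => (ω.2.2.1, (ω.1.2.1 ω.2.1, ω.1)))
          ≤ condEnt PP (fun ω => ω.2.2.2.1)
            (fun ω => (ω.1.2.1 ω.2.1, ω.1.2.2 ω.2.2.1, ω.1.1)) :=
        condEnt_cond_comp_le hp0 _
          (fun ω => (ω.2.2.1, (ω.1.2.1 ω.2.1, ω.1)))
          (fun z => (z.2.1, z.2.2.2.2 z.1, z.2.2.1))
      have s2 : condEnt PP (fun ω => ω.2.2.2.1)
          (fun ω => (ω.1.2.1 ω.2.1, ω.1.2.2 ω.2.2.1, ω.1.1))
          ≤ ∑ i0 : Fin n, condEnt PP (fun ω => ω.2.2.2.1 i0)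
              (fun ω => (ω.1.2.1 ω.2.1, ω.1.2.2 ω.2.2.1, ω.1.1)) :=
        condEnt_pi_le hp0 n _ _
      have s3 : ∑ i0 : Fin n, condEnt PP (fun ω => ω.2.2.2.1 i0)
            (fun ω => (ω.1.2.1 ω.2.1, ω.1.2.2 ω.2.2.1, ω.1.1))
          ≤ ∑ i0 : Fin n, condEnt PP (fun ω => ω.2.2.2.1 i0)
              (fun ω => (ω.1.2.1 ω.2.1 i0, ω.1.2.2 ω.2.2.1 i0, ω.1.1 i0)) :=
        Finset.sum_le_sum fun i0 _ =>
          condEnt_cond_comp_le hp0 _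
            (fun ω => (ω.1.2.1 ω.2.1, ω.1.2.2 ω.2.2.1, ω.1.1))
            (fun z => (z.1 i0, z.2.1 i0, z.2.2 i0))
      have s4 : ∑ i0 : Fin n, condEnt PP (fun ω => ω.2.2.2.1 i0)
            (fun ω => (ω.1.2.1 ω.2.1 i0, ω.1.2.2 ω.2.2.1 i0, ω.1.1 i0))
          = (n : ℝ) * condEnt (jointP pQ pX1 pX2 W) vY1
              (fun z => (vX1 z, vX2 z, vQ z)) := by
        rw [Finset.sum_congr rfl fun i0 _ => key2 i0, Finset.sum_const, Finset.card_univ,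
          Fintype.card_fin, nsmul_eq_mul]
      linarith
    linarith

end TwoUser
end
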